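/- For 0 ≤ b ≤ n−1, the elementary symmetric polynomial σ_b evaluated at the Jucys–Murphy elements equals the sum of all permutations of Sₙ having exactly n − b cycles: σ_b(𝒥₂,…,𝒥ₙ) = ∑_{g ∈ Sₙ, ℓ(g) = n−b} g in ℚ[Sₙ], where ℓ(g) is the number of cycles (including fixed points) of g. -/

import Mathlib

open Finset

noncomputable def JM (n : ℕ) (k : Fin (n + 1)) : MonoidAlgebra ℚ (Equiv.Perm (Fin (n + 1))) :=
  ∑ i ∈ Finset.univ.filter (fun i : Fin (n + 1) => i < k),
    MonoidAlgebra.of ℚ (Equiv.Perm (Fin (n + 1))) (Equiv.swap i k)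

def numCycles (n : ℕ) (g : Equiv.Perm (Fin (n + 1))) : ℕ :=
  g.cycleType.card + ((n + 1) - g.cycleType.sum)

namespace Jucys

open Equiv Equiv.Perm

variable {α : Type*} [DecidableEq α] [Fintype α]

theorem isCycle_swap_mul_ins {c : Perm α} (hc : c.IsCycle) {a b : α}
    (hab : a ≠ b) (ha : c a ≠ a) (hb : c b = b) :
    IsCycle (Equiv.swap a b * c) ∧ (Equiv.swap a b * c).support = insert b c.support := by
  set γ := Equiv.swap a b * c with hγ
  have happ : ∀ x, γ x = Equiv.swap a b (c x) := fun x => rfl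
  have hγb : γ b = a := by rw [happ, hb, Equiv.swap_apply_right]
  have hcxb : ∀ x, c x ≠ x → c x ≠ b := by
    intro x hx hxb
    have hxb' : x = b := c.injective (hxb.trans hb.symm)
    exact hx (by rw [hxb']; exact hb)
  have step : ∀ x, c x ≠ x → γ.SameCycle x (c x) := by
    intro x hx
    rcases eq_or_ne (c x) a with h | h
    · have h1 : γ x = b := by rw [happ, h, Equiv.swap_apply_left]
      have hA : γ.SameCycle x b := ⟨1, by simpa using h1⟩
      have hB : γ.SameCycle b (c x) := ⟨1, by simpa [hγb] using h.symm⟩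
      exact hA.trans hB
    · have h2 : γ x = c x := by rw [happ, Equiv.swap_apply_of_ne_of_ne h (hcxb x hx)]
      exact ⟨1, by simpa using h2⟩
  have iter : ∀ (k : ℕ) (x), x ∈ c.support → γ.SameCycle x ((c ^ k) x) := by
    intro k
    induction k with
    | zero => intro x _; simp [Equiv.Perm.SameCycle.refl]
    | succ k ih =>
      intro x hx
      have h2 : (c ^ k) x ∈ c.support := (pow_apply_mem_support).2 hx
      refine (ih x hx).trans ?_
      rw [pow_succ', Perm.mul_apply]
      exact step _ (mem_support.1 h2)
  have hsupp : γ.support = insert b c.support := by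
    ext x
    simp only [mem_support, mem_insert]
    constructor
    · intro hx
      by_cases hxb : x = b
      · exact Or.inl hxb
      · right; intro hcx
        apply hx
        have hxa : x ≠ a := fun e => ha (by rw [← e]; exact hcx)
        rw [happ, hcx, Equiv.swap_apply_of_ne_of_ne hxa hxb]
    · intro h
      rcases h with rfl | hcx
      · rw [hγb]; exact hab
      · rcases eq_or_ne (c x) a with h | h
        · rw [happ, h, Equiv.swap_apply_left]
          intro e
          exact hcx (by rw [← e]; exact hb)
        · rw [happ, Equiv.swap_apply_of_ne_of_ne h (hcxb x hcx)]; exact hcx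
  refine ⟨⟨b, by rw [hγb]; exact hab, ?_⟩, hsupp⟩
  intro y hy
  rcases eq_or_ne y b with rfl | hyb
  · exact Equiv.Perm.SameCycle.refl _ _
  · have hyc : c y ≠ y := by
      intro hfix
      apply hy
      have hya : y ≠ a := fun e => ha (e ▸ hfix)
      rw [happ, hfix, Equiv.swap_apply_of_ne_of_ne hya hyb]
    obtain ⟨x₀, hx₀, hall⟩ := hc
    have hay : c.SameCycle a y := (hall ha).symm.trans (hall hyc)
    obtain ⟨k, -, hk⟩ := hay.exists_pow_eq'
    have h3 := iter k a (mem_support.2 ha)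
    rw [hk] at h3
    have hC : γ.SameCycle b a := ⟨1, by simpa using hγb⟩
    exact hC.trans h3

theorem cycleType_swap_mul {g : Perm α} {a b : α} (hab : a ≠ b) (hb : g b = b) :
    ((Equiv.swap a b * g).cycleType.sum = g.cycleType.sum + (if g a = a then 2 else 1)) ∧
    (Multiset.card (Equiv.swap a b * g).cycleType
      = Multiset.card g.cycleType + (if g a = a then 1 else 0)) := by
  by_cases hga : g a = a
  · have hdisj : Disjoint (Equiv.swap a b) g := by
      intro x
      by_cases hx : x = a
      · exact Or.inr (hx ▸ hga)
      · by_cases hx' : x = b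
        · exact Or.inr (hx' ▸ hb)
        · exact Or.inl (Equiv.swap_apply_of_ne_of_ne hx hx')
    have h1 := Disjoint.cycleType_mul hdisj
    have h2 : (Equiv.swap a b).cycleType = {2} := by
      rw [(isCycle_swap hab).cycleType, support_swap hab,
        Finset.card_insert_of_notMem (by simpa using hab), Finset.card_singleton]
    rw [h1, h2]
    constructor
    · simp [hga]; omega
    · simp [hga]
  · classical
    set c := g.cycleOf a with hcdef
    have hc : c.IsCycle := isCycle_cycleOf g hga
    have hmem : c ∈ g.cycleFactorsFinset := cycleOf_mem_cycleFactorsFinset_iff.mpr (mem_support.2 hga)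
    set d := g * c⁻¹ with hddef
    have hdisj : Disjoint d c := disjoint_mul_inv_of_mem_cycleFactorsFinset hmem
    have hg : g = d * c := by rw [hddef, inv_mul_cancel_right]
    have hca : c a ≠ a := by rw [hcdef, cycleOf_apply_self]; exact hga
    have hcb : c b = b := by
      have : b ∉ c.support := fun hbc => (mem_support.1 (support_cycleOf_le g a hbc)) hb
      exact notMem_support.1 this
    have hda : d a = a := by
      rcases hdisj a with h | h
      · exact h
      · exact absurd h hca
    have hdb : d b = b := by
      rw [hddef, Perm.mul_apply]
      have hinv : c⁻¹ b = b := c.injective (by rw [← Perm.mul_apply, mul_inv_cancel, Perm.one_apply]; exact hcb.symm)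
      rw [hinv, hb]
    obtain ⟨hγc, hsupp⟩ := isCycle_swap_mul_ins hc hab hca hcb
    have hbns : b ∉ c.support := notMem_support.2 hcb
    have hdisj2 : Disjoint d (Equiv.swap a b * c) := by
      intro x
      by_cases hdx : d x = x
      · exact Or.inl hdx
      · right
        have hcx : c x = x := (hdisj x).resolve_left hdx
        have hxa : x ≠ a := fun e => hdx (e ▸ hda)
        have hxb : x ≠ b := fun e => hdx (e ▸ hdb)
        show Equiv.swap a b (c x) = x
        rw [hcx, Equiv.swap_apply_of_ne_of_ne hxa hxb]
    have hdisjswap : Disjoint (Equiv.swap a b) d := by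
      intro x
      by_cases hx : x = a
      · exact Or.inr (hx ▸ hda)
      · by_cases hx' : x = b
        · exact Or.inr (hx' ▸ hdb)
        · exact Or.inl (Equiv.swap_apply_of_ne_of_ne hx hx')
    have heq : Equiv.swap a b * g = d * (Equiv.swap a b * c) := by
      rw [hg, ← mul_assoc, hdisjswap.commute.eq, mul_assoc]
    have hsc : (Equiv.swap a b * c).cycleType = {c.support.card + 1} := by
      rw [hγc.cycleType, hsupp, Finset.card_insert_of_notMem hbns]
    have hctg : g.cycleType = d.cycleType + {c.support.card} := by
      rw [hg, Disjoint.cycleType_mul hdisj, hc.cycleType]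
    have hctγ : (Equiv.swap a b * g).cycleType = d.cycleType + {c.support.card + 1} := by
      rw [heq, Disjoint.cycleType_mul hdisj2, hsc]
    rw [hctγ, hctg]
    constructor
    · simp [hga]; omega
    · simp [hga]

theorem numCycles_pos (n : ℕ) (g : Perm (Fin (n+1))) : 0 < numCycles n g := by
  unfold numCycles
  by_cases h : Multiset.card g.cycleType = 0
  · have hg : g = 1 := card_cycleType_eq_zero.1 h
    subst hg
    simp [cycleType_one]
  · omega

theorem numCycles_eq_top_iff {n : ℕ} {g : Perm (Fin (n+1))} :
    numCycles n g = n + 1 ↔ g = 1 := by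
  constructor
  · intro h
    unfold numCycles at h
    have h1 : g.cycleType.sum = g.support.card := sum_cycleType g
    have h2 : g.support.card ≤ n + 1 := by simpa using Finset.card_le_univ g.support
    have h3 : Multiset.card g.cycleType • 2 ≤ g.cycleType.sum :=
      Multiset.card_nsmul_le_sum (fun x hx => two_le_of_mem_cycleType hx)
    rw [smul_eq_mul] at h3
    exact card_cycleType_eq_zero.1 (by omega)
  · rintro rfl
    simp [numCycles, cycleType_one]

noncomputable def pEmb (n : ℕ) : Perm (Fin (n+1)) →* Perm (Fin (n+2)) :=
  Equiv.Perm.extendDomainHom (Fin.castSuccEmb : Fin (n+1) ↪ Fin (n+2)).toEquivRange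

theorem pEmb_apply_castSucc (n : ℕ) (h : Perm (Fin (n+1))) (i : Fin (n+1)) :
    pEmb n h i.castSucc = (h i).castSucc := by
  show h.extendDomain _ i.castSucc = _
  have := Equiv.Perm.extendDomain_apply_image h
    (Fin.castSuccEmb : Fin (n+1) ↪ Fin (n+2)).toEquivRange i
  exact this

theorem last_not_range (n : ℕ) :
    Fin.last (n+1) ∉ Set.range (Fin.castSuccEmb : Fin (n+1) ↪ Fin (n+2)) := by
  rintro ⟨y, hy⟩
  exact (Fin.castSucc_lt_last y).ne hy

theorem pEmb_apply_last (n : ℕ) (h : Perm (Fin (n+1))) :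
    pEmb n h (Fin.last (n+1)) = Fin.last (n+1) :=
  Equiv.Perm.extendDomain_apply_not_subtype h _ (last_not_range n)

theorem pEmb_cycleType (n : ℕ) (h : Perm (Fin (n+1))) :
    (pEmb n h).cycleType = h.cycleType :=
  Equiv.Perm.cycleType_extendDomain _

theorem pEmb_injective (n : ℕ) : Function.Injective (pEmb n) :=
  Equiv.Perm.extendDomainHom_injective _

theorem pEmb_swap (n : ℕ) (i j : Fin (n+1)) :
    pEmb n (Equiv.swap i j) = Equiv.swap i.castSucc j.castSucc := by
  apply Equiv.ext
  intro x
  induction x using Fin.lastCases with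
  | last =>
    rw [pEmb_apply_last,
      Equiv.swap_apply_of_ne_of_ne (Fin.castSucc_lt_last i).ne' (Fin.castSucc_lt_last j).ne']
  | cast y =>
    rw [pEmb_apply_castSucc]
    exact ((Fin.castSucc_injective _).swap_apply i j y).symm

theorem exists_pEmb (n : ℕ) {g : Perm (Fin (n+2))} (hg : g (Fin.last (n+1)) = Fin.last (n+1)) :
    ∃ h : Perm (Fin (n+1)), pEmb n h = g := by
  have bridge : ∀ h : Perm (Fin (n+1)),
      pEmb n h = (finSuccEquivLast.symm.permCongr) h.optionCongr := by
    intro h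
    apply Equiv.ext
    intro x
    induction x using Fin.lastCases with
    | last =>
      rw [pEmb_apply_last]
      simp [Equiv.permCongr_apply]
    | cast y =>
      rw [pEmb_apply_castSucc]
      simp [Equiv.permCongr_apply]
  set σ := finSuccEquivLast.permCongr g with hσ
  have hnone : σ none = none := by simp [hσ, Equiv.permCongr_apply, hg]
  refine ⟨Equiv.removeNone σ, ?_⟩
  rw [bridge]
  have hoc : (Equiv.removeNone σ).optionCongr = σ := by
    have h2 := map_equiv_removeNone σ
    rw [hnone] at h2
    simpa using h2
  rw [hoc]
  apply Equiv.ext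
  intro x
  simp [hσ, Equiv.permCongr_apply]

theorem numCycles_pEmb (n : ℕ) (h : Perm (Fin (n+1))) :
    numCycles (n+1) (pEmb n h) = numCycles n h + 1 := by
  unfold numCycles
  rw [pEmb_cycleType]
  have h1 : h.cycleType.sum ≤ n + 1 := by
    rw [sum_cycleType]
    simpa using Finset.card_le_univ h.support
  omega

theorem numCycles_swap_mul {m : ℕ} {g : Perm (Fin (m+1))} {a b : Fin (m+1)}
    (hab : a ≠ b) (hb : g b = b) :
    numCycles m (Equiv.swap a b * g) + 1 = numCycles m g := by
  obtain ⟨hsum, hcard⟩ := cycleType_swap_mul hab hb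
  have hsupp : g.support ⊆ Finset.univ.erase b := fun x hx =>
    Finset.mem_erase.2 ⟨fun e => (mem_support.1 hx) (by rw [e, hb]), Finset.mem_univ x⟩
  have hsum' : g.cycleType.sum = g.support.card := sum_cycleType g
  by_cases hga : g a = a
  · have hsupp2 : g.support ⊆ (Finset.univ.erase b).erase a := fun x hx =>
      Finset.mem_erase.2 ⟨fun e => (mem_support.1 hx) (by rw [e]; exact hga), hsupp hx⟩
    have hm : 1 ≤ m := by
      by_contra hm'
      have : m = 0 := by omega
      subst this
      have h1 := a.isLt
      have h2 := b.isLt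
      exact hab (Fin.ext (by omega))
    have hs : g.support.card ≤ m - 1 := by
      have h1 := Finset.card_le_card hsupp2
      have h2 : a ∈ Finset.univ.erase b := Finset.mem_erase.2 ⟨hab, Finset.mem_univ a⟩
      rw [Finset.card_erase_of_mem h2, Finset.card_erase_of_mem (Finset.mem_univ b)] at h1
      simpa using h1
    rw [if_pos hga] at hsum
    rw [if_pos hga] at hcard
    unfold numCycles
    omega
  · have hs : g.support.card ≤ m := by
      have h1 := Finset.card_le_card hsupp
      rw [Finset.card_erase_of_mem (Finset.mem_univ b)] at h1
      simpa using h1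
    rw [if_neg hga] at hsum
    rw [if_neg hga] at hcard
    unfold numCycles
    omega


theorem of_comm_JM {n : ℕ} {σ : Perm (Fin (n+1))} {k : Fin (n+1)}
    (hσk : σ k = k) (hlt : ∀ i, i < k → σ i < k) :
    Commute (MonoidAlgebra.of ℚ (Perm (Fin (n+1))) σ) (JM n k) := by
  have key : ∀ i : Fin (n+1), σ * Equiv.swap i k = Equiv.swap (σ i) k * σ := by
    intro i
    have h := Equiv.swap_apply_apply σ i k
    rw [hσk] at h
    rw [h, mul_assoc, inv_mul_cancel, mul_one]
  have himg : (Finset.univ.filter (fun i : Fin (n+1) => i < k)).image σ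
      = Finset.univ.filter (fun i : Fin (n+1) => i < k) := by
    apply Finset.eq_of_subset_of_card_le
    · intro x hx
      obtain ⟨y, hy, rfl⟩ := Finset.mem_image.1 hx
      exact Finset.mem_filter.2 ⟨Finset.mem_univ _, hlt y (Finset.mem_filter.1 hy).2⟩
    · rw [Finset.card_image_of_injective _ σ.injective]
  show _ * _ = _ * _
  unfold JM
  rw [Finset.mul_sum, Finset.sum_mul]
  simp_rw [← map_mul, key]
  apply Finset.sum_bij (fun a _ => σ a)
  · intro a ha
    exact Finset.mem_filter.2 ⟨Finset.mem_univ _, hlt a (Finset.mem_filter.1 ha).2⟩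
  · intro a _ b _ hab
    exact σ.injective hab
  · intro b hb
    rw [← himg] at hb
    obtain ⟨a, ha, rfl⟩ := Finset.mem_image.1 hb
    exact ⟨a, ha, rfl⟩
  · intro a _
    rfl

theorem JM_comm (n : ℕ) (j k : Fin (n + 1)) : Commute (JM n j) (JM n k) := by
  have main : ∀ j k : Fin (n+1), j < k → Commute (JM n j) (JM n k) := by
    intro j k hjk
    have : JM n j = ∑ i ∈ Finset.univ.filter (fun i : Fin (n+1) => i < j),
        MonoidAlgebra.of ℚ (Perm (Fin (n+1))) (Equiv.swap i j) := rfl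
    rw [this]
    apply Commute.sum_left
    intro i hi
    have hij : i < j := (Finset.mem_filter.1 hi).2
    apply of_comm_JM
    · exact Equiv.swap_apply_of_ne_of_ne (hij.trans hjk).ne' hjk.ne'
    · intro x hx
      rcases eq_or_ne x i with rfl | hxi
      · rw [Equiv.swap_apply_left]; exact hjk
      · rcases eq_or_ne x j with rfl | hxj
        · rw [Equiv.swap_apply_right]; exact hij.trans hjk
        · rw [Equiv.swap_apply_of_ne_of_ne hxi hxj]; exact hx
  rcases lt_trichotomy j k with h | rfl | h
  · exact main j k h
  · exact Commute.refl _
  · exact (main k j h).symm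

theorem noncommProd_map' {ι κ M : Type*} [Monoid M] (s : Finset ι) (e : ι ↪ κ) (f : κ → M)
    (comm) :
    (s.map e).noncommProd f comm =
      s.noncommProd (fun i => f (e i))
        (fun a ha b hb hab => comm (Finset.mem_map_of_mem e ha)
          (Finset.mem_map_of_mem e hb) (fun h => hab (e.injective h))) := by
  simp only [Finset.noncommProd, Finset.map_val, Multiset.map_map]
  congr 1

/-- The ring homomorphism embedding `ℚ[S_{n+1}]` into `ℚ[S_{n+2}]`. -/
noncomputable def ιA (n : ℕ) :
    MonoidAlgebra ℚ (Perm (Fin (n+1))) →+* MonoidAlgebra ℚ (Perm (Fin (n+2))) :=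
  MonoidAlgebra.mapDomainRingHom ℚ (pEmb n)

theorem ιA_of (n : ℕ) (g : Perm (Fin (n+1))) :
    ιA n (MonoidAlgebra.of ℚ (Perm (Fin (n+1))) g)
      = MonoidAlgebra.of ℚ (Perm (Fin (n+2))) (pEmb n g) := by
  simp [ιA, MonoidAlgebra.of_apply, Finsupp.mapDomain_single]

theorem filter_lt_eq_Iio {m : ℕ} (k : Fin m) :
    Finset.univ.filter (fun i : Fin m => i < k) = Finset.Iio k := by
  ext x
  simp

theorem filter_lt_castSucc (n : ℕ) (j : Fin (n+1)) :
    (Finset.univ.filter (fun i : Fin (n+2) => i < j.castSucc))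
      = (Finset.univ.filter (fun i : Fin (n+1) => i < j)).map Fin.castSuccEmb := by
  rw [filter_lt_eq_Iio, filter_lt_eq_Iio, Fin.Iio_castSucc]

theorem filter_lt_last (n : ℕ) :
    (Finset.univ.filter (fun i : Fin (n+2) => i < Fin.last (n+1)))
      = (Finset.univ : Finset (Fin (n+1))).map Fin.castSuccEmb := by
  rw [filter_lt_eq_Iio, Fin.Iio_last_eq_map]

theorem JM_castSucc (n : ℕ) (j : Fin (n+1)) :
    JM (n+1) j.castSucc = ιA n (JM n j) := by
  unfold JM
  rw [map_sum, filter_lt_castSucc, Finset.sum_map]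
  apply Finset.sum_congr rfl
  intro i _
  rw [ιA_of, pEmb_swap]
  rfl

theorem JM_last (n : ℕ) :
    JM (n+1) (Fin.last (n+1)) = ∑ i : Fin (n+1),
      MonoidAlgebra.of ℚ (Perm (Fin (n+2))) (Equiv.swap i.castSucc (Fin.last (n+1))) := by
  unfold JM
  rw [filter_lt_last, Finset.sum_map]
  rfl


noncomputable def S (n b : ℕ) : MonoidAlgebra ℚ (Perm (Fin (n+1))) :=
  ∑ s ∈ Finset.powersetCard b (Finset.univ : Finset (Fin n)),
    s.noncommProd (fun k : Fin n => JM n k.succ)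
      (fun a _ c _ _ => JM_comm n a.succ c.succ)

noncomputable def R (n b : ℕ) : MonoidAlgebra ℚ (Perm (Fin (n+1))) :=
  ∑ g ∈ Finset.univ.filter (fun g : Perm (Fin (n+1)) => numCycles n g = (n+1) - b),
    MonoidAlgebra.of ℚ (Perm (Fin (n+1))) g

theorem S_zero (n : ℕ) : S n 0 = R n 0 := by
  have h1 : S n 0 = 1 := by
    unfold S
    rw [Finset.powersetCard_zero, Finset.sum_singleton]
    exact Finset.noncommProd_empty _ _
  have h2 : R n 0 = 1 := by
    unfold R
    have he : Finset.univ.filter (fun g : Perm (Fin (n+1)) => numCycles n g = (n+1) - 0)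
        = {1} := by
      ext g
      simp only [Finset.mem_filter, Finset.mem_univ, true_and, Finset.mem_singleton,
        Nat.sub_zero]
      exact numCycles_eq_top_iff
    rw [he, Finset.sum_singleton, map_one]
  rw [h1, h2]

theorem S_big {n b : ℕ} (hb : n < b) : S n b = 0 := by
  unfold S
  rw [Finset.powersetCard_eq_empty.2 (by simpa using hb), Finset.sum_empty]

theorem R_big {n b : ℕ} (hb : n + 1 ≤ b) : R n b = 0 := by
  unfold R
  rw [Finset.filter_false_of_mem, Finset.sum_empty]
  intro g _ hgc
  have h1 := numCycles_pos n g
  omega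

theorem S_succ (n b : ℕ) :
    S (n+1) (b+1) = ιA n (S n (b+1)) + JM (n+1) (Fin.last (n+1)) * ιA n (S n b) := by
  unfold S
  have hlast : Fin.last n ∉ (Finset.univ : Finset (Fin n)).map Fin.castSuccEmb := by
    simp only [Finset.mem_map]
    rintro ⟨y, -, hy⟩
    exact (Fin.castSucc_lt_last y).ne hy
  have hcontent : ∀ j : Fin n,
      JM (n+1) ((Fin.castSuccEmb j).succ) = ιA n (JM n j.succ) := by
    intro j
    show JM (n+1) ((Fin.castSucc j).succ) = _
    rw [Fin.succ_castSucc]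
    exact JM_castSucc n j.succ
  rw [Fin.univ_castSuccEmb, Finset.cons_eq_insert, Finset.powersetCard_succ_insert hlast]
  rw [Finset.sum_union ?hdisj]
  case hdisj =>
    rw [Finset.disjoint_left]
    intro t ht1 ht2
    have h1 : Fin.last n ∉ t := fun hmem => hlast ((Finset.mem_powersetCard.1 ht1).1 hmem)
    obtain ⟨u, hu, rfl⟩ := Finset.mem_image.1 ht2
    exact h1 (Finset.mem_insert_self _ _)
  congr 1
  · rw [Finset.powersetCard_map, Finset.sum_map, map_sum]
    apply Finset.sum_congr rfl
    intro t ht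
    have e1 : (Finset.mapEmbedding Fin.castSuccEmb).toEmbedding t = t.map Fin.castSuccEmb :=
      rfl
    simp only [e1]
    rw [noncommProd_map' t Fin.castSuccEmb _]
    exact (Finset.noncommProd_congr rfl (fun j _ => hcontent j) _).trans
      (Finset.map_noncommProd _ _ _ _).symm
  · rw [Finset.sum_image ?hinj]
    case hinj =>
      intro t ht u hu htu
      have h1 : Fin.last n ∉ t := fun hmem => hlast ((Finset.mem_powersetCard.1 ht).1 hmem)
      have h2 : Fin.last n ∉ u := fun hmem => hlast ((Finset.mem_powersetCard.1 hu).1 hmem)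
      rw [← Finset.erase_insert h1, htu, Finset.erase_insert h2]
    rw [Finset.powersetCard_map, Finset.sum_map, map_sum, Finset.mul_sum]
    apply Finset.sum_congr rfl
    intro t ht
    have hnotmem : Fin.last n ∉ t.map Fin.castSuccEmb := by
      simp only [Finset.mem_map]
      rintro ⟨y, -, hy⟩
      exact (Fin.castSucc_lt_last y).ne hy
    have e1 : (Finset.mapEmbedding Fin.castSuccEmb).toEmbedding t = t.map Fin.castSuccEmb :=
      rfl
    simp only [e1]
    rw [Finset.noncommProd_insert_of_notMem _ _ _ _ hnotmem]
    congr 1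
    rw [noncommProd_map' t Fin.castSuccEmb _]
    exact (Finset.noncommProd_congr rfl (fun j _ => hcontent j) _).trans
      (Finset.map_noncommProd _ _ _ _).symm

theorem R_succ (n b : ℕ) (hb : b ≤ n) :
    R (n+1) (b+1) = ιA n (R n (b+1)) + JM (n+1) (Fin.last (n+1)) * ιA n (R n b) := by
  unfold R
  rw [← Finset.sum_filter_add_sum_filter_not
    (Finset.univ.filter (fun g : Perm (Fin (n+2)) => numCycles (n+1) g = (n+2) - (b+1)))
    (fun g => g (Fin.last (n+1)) = Fin.last (n+1))]
  congr 1
  · rw [map_sum]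
    have hof : ∀ h ∈ Finset.univ.filter
        (fun h : Perm (Fin (n+1)) => numCycles n h = (n+1) - (b+1)),
        ιA n (MonoidAlgebra.of ℚ (Perm (Fin (n+1))) h)
          = MonoidAlgebra.of ℚ (Perm (Fin (n+2))) (pEmb n h) := fun h _ => ιA_of n h
    rw [Finset.sum_congr rfl hof]
    symm
    apply Finset.sum_bij (fun (h : Perm (Fin (n+1))) _ => pEmb n h)
    · intro h hh
      simp only [Finset.mem_filter, Finset.mem_univ, true_and] at hh ⊢
      refine ⟨?_, pEmb_apply_last n h⟩
      rw [numCycles_pEmb]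
      have h1 := numCycles_pos n h
      omega
    · intro a _ b _ hab
      exact pEmb_injective n hab
    · intro g hg
      simp only [Finset.mem_filter, Finset.mem_univ, true_and] at hg
      obtain ⟨hgc, hgfix⟩ := hg
      obtain ⟨h, rfl⟩ := exists_pEmb n hgfix
      refine ⟨h, ?_, rfl⟩
      simp only [Finset.mem_filter, Finset.mem_univ, true_and]
      rw [numCycles_pEmb] at hgc
      omega
    · intro a _
      rfl
  · rw [JM_last]
    have hR : ιA n (∑ g ∈ Finset.univ.filter
          (fun g : Perm (Fin (n+1)) => numCycles n g = (n+1) - b),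
          MonoidAlgebra.of ℚ (Perm (Fin (n+1))) g) = ∑ h ∈ Finset.univ.filter
        (fun h : Perm (Fin (n+1)) => numCycles n h = (n+1) - b),
        MonoidAlgebra.of ℚ (Perm (Fin (n+2))) (pEmb n h) := by
      rw [map_sum]
      exact Finset.sum_congr rfl (fun h _ => ιA_of n h)
    rw [hR, Finset.sum_mul_sum, ← Finset.sum_product']
    symm
    apply Finset.sum_bij (fun (p : Fin (n+1) × Perm (Fin (n+1))) _ =>
      Equiv.swap p.1.castSucc (Fin.last (n+1)) * pEmb n p.2)
    · rintro ⟨i, h⟩ hp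
      simp only [Finset.mem_product, Finset.mem_filter, Finset.mem_univ, true_and] at hp
      simp only [Finset.mem_filter, Finset.mem_univ, true_and]
      have hne : i.castSucc ≠ Fin.last (n+1) := (Fin.castSucc_lt_last i).ne
      have hkey := numCycles_swap_mul hne (pEmb_apply_last n h)
      rw [numCycles_pEmb] at hkey
      constructor
      · omega
      · rw [Perm.mul_apply, pEmb_apply_last, Equiv.swap_apply_right]
        exact hne
    · rintro ⟨i, h⟩ _ ⟨i', h'⟩ _ heq
      have h1 : i.castSucc = i'.castSucc := by
        have := congrArg (fun σ : Perm (Fin (n+2)) => σ (Fin.last (n+1))) heq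
        simpa [Perm.mul_apply, pEmb_apply_last, Equiv.swap_apply_right] using this
      have h2 : i = i' := Fin.castSucc_injective _ h1
      subst h2
      have h3 : pEmb n h = pEmb n h' := mul_left_cancel heq
      rw [pEmb_injective n h3]
    · intro g hg
      simp only [Finset.mem_filter, Finset.mem_univ, true_and] at hg
      obtain ⟨hgc, hgfix⟩ := hg
      set a := g (Fin.last (n+1)) with ha
      have hane : a ≠ Fin.last (n+1) := hgfix
      have hfix2 : (Equiv.swap a (Fin.last (n+1)) * g) (Fin.last (n+1)) = Fin.last (n+1) := by
        rw [Perm.mul_apply, ← ha, Equiv.swap_apply_left]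
      obtain ⟨h, hh⟩ := exists_pEmb n hfix2
      have hgeq : g = Equiv.swap a (Fin.last (n+1)) * pEmb n h := by
        rw [hh, ← mul_assoc, Equiv.swap_mul_self, one_mul]
      have hne : a ≠ Fin.last (n+1) := hane
      have hkey := numCycles_swap_mul hne (pEmb_apply_last n h)
      rw [numCycles_pEmb, ← hgeq] at hkey
      refine ⟨⟨a.castPred hane, h⟩, ?_, ?_⟩
      · simp only [Finset.mem_product, Finset.mem_filter, Finset.mem_univ, true_and]
        omega
      · rw [Fin.castSucc_castPred]
        exact hgeq.symm
    · rintro ⟨i, h⟩ _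
      exact (map_mul (MonoidAlgebra.of ℚ (Perm (Fin (n+2)))) _ _).symm

theorem main (n : ℕ) : ∀ b : ℕ, S n b = R n b := by
  induction n with
  | zero =>
    intro b
    match b with
    | 0 => exact S_zero 0
    | b+1 => rw [S_big (by omega), R_big (by omega)]
  | succ n ih =>
    intro b
    match b with
    | 0 => exact S_zero (n+1)
    | b+1 =>
      by_cases hb : b ≤ n
      · rw [S_succ n b, ih (b+1), ih b, R_succ n b hb]
      · rw [S_big (by omega), R_big (by omega)]

end Jucys

theorem esymm_JM_eq_sum_perms (n b : ℕ) (hb : b ≤ n)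
    (hcomm : ∀ j k : Fin (n + 1), Commute (JM n j) (JM n k)) :
    ∑ s ∈ Finset.powersetCard b (Finset.univ : Finset (Fin n)),
        s.noncommProd (fun k : Fin n => JM n k.succ)
          (fun a _ c _ _ => hcomm a.succ c.succ) =
      ∑ g ∈ Finset.univ.filter (fun g : Equiv.Perm (Fin (n + 1)) =>
          numCycles n g = (n + 1) - b),
        MonoidAlgebra.of ℚ (Equiv.Perm (Fin (n + 1))) g :=
  Jucys.main n b
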